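/- (Existence of voltage potentials) Let G be a connected locally finite simple graph with conductance function c, and let α, β ∈ V be distinct vertices. Then there exists a function v : V → ℝ of finite energy, i.e. the sum E_c(v) = Σ over ordered adjacent pairs (x,y) of c x y · (v(x) − v(y))² converges, such that for every x ∈ V, Σ_{y adjacent to x} c x y · (v(x) − v(y)) = δ_α(x) − δ_β(x) (where δ_α is the indicator of α), and moreover E_c(v) = 2 · (v(α) − v(β)). -/

import Mathlib

open scoped BigOperators

section VoltageAux

variable {V : Type*} [DecidableEq V] (G : SimpleGraph V) [DecidableRel G.Adj] (c : V → V → ℝ)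

/-- Energy term of a function on an ordered pair of vertices. -/
def eTerm (u : V → ℝ) : V × V → ℝ :=
  fun p => if G.Adj p.1 p.2 then c p.1 p.2 * (u p.1 - u p.2) ^ 2 else 0

/-- Bilinear (polarized) energy term. -/
def bTerm (u v : V → ℝ) : V × V → ℝ :=
  fun p => if G.Adj p.1 p.2 then c p.1 p.2 * ((u p.1 - u p.2) * (v p.1 - v p.2)) else 0

lemma eTerm_nonneg (hpos : ∀ x y, G.Adj x y → 0 < c x y) (u : V → ℝ) (p : V × V) :
    0 ≤ eTerm G c u p := by
  unfold eTerm
  split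
  · exact mul_nonneg (le_of_lt (hpos _ _ ‹_›)) (sq_nonneg _)
  · exact le_rfl

lemma eTerm_eq_bTerm (u : V → ℝ) : eTerm G c u = bTerm G c u u := by
  funext p
  unfold eTerm bTerm
  split <;> ring

lemma bTerm_comm (u v : V → ℝ) : bTerm G c u v = bTerm G c v u := by
  funext p; unfold bTerm; split <;> ring

lemma abs_bTerm_le (hpos : ∀ x y, G.Adj x y → 0 < c x y) (u v : V → ℝ) (p : V × V) :
    |bTerm G c u v p| ≤ (eTerm G c u p + eTerm G c v p) / 2 := by
  unfold bTerm eTerm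
  split
  · rename_i h
    have hc := (hpos p.1 p.2 h).le
    rw [abs_le]
    constructor
    · nlinarith [mul_nonneg hc (sq_nonneg (u p.1 - u p.2 + (v p.1 - v p.2)))]
    · nlinarith [mul_nonneg hc (sq_nonneg (u p.1 - u p.2 - (v p.1 - v p.2)))]
  · simp

lemma bTerm_summable (hpos : ∀ x y, G.Adj x y → 0 < c x y) {u v : V → ℝ}
    (hu : Summable (eTerm G c u)) (hv : Summable (eTerm G c v)) :
    Summable (bTerm G c u v) := by
  apply Summable.of_norm_bounded (g := fun p => (eTerm G c u p + eTerm G c v p) / 2)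
    ((hu.add hv).div_const 2)
  intro p
  simpa [Real.norm_eq_abs] using abs_bTerm_le G c hpos u v p

lemma eTerm_add_le (hpos : ∀ x y, G.Adj x y → 0 < c x y) (u v : V → ℝ) (p : V × V) :
    eTerm G c (u + v) p ≤ 2 * eTerm G c u p + 2 * eTerm G c v p := by
  unfold eTerm
  split
  · rename_i h
    have hc := (hpos p.1 p.2 h).le
    have : ((u + v) p.1 - (u + v) p.2) = (u p.1 - u p.2) + (v p.1 - v p.2) := by
      simp [Pi.add_apply]; ring
    rw [this]
    nlinarith [mul_nonneg hc (sq_nonneg ((u p.1 - u p.2) - (v p.1 - v p.2)))]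
  · simp

lemma eTerm_add_summable (hpos : ∀ x y, G.Adj x y → 0 < c x y) {u v : V → ℝ}
    (hu : Summable (eTerm G c u)) (hv : Summable (eTerm G c v)) :
    Summable (eTerm G c (u + v)) := by
  apply Summable.of_nonneg_of_le (eTerm_nonneg G c hpos (u + v))
    (eTerm_add_le G c hpos u v)
  exact ((hu.mul_left 2).add (hv.mul_left 2))

lemma eTerm_smul (r : ℝ) (u : V → ℝ) :
    eTerm G c (r • u) = fun p => r ^ 2 * eTerm G c u p := by
  funext p
  unfold eTerm
  split <;> simp <;> ring

lemma bTerm_add_left (u v w : V → ℝ) (p : V × V) :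
    bTerm G c (u + v) w p = bTerm G c u w p + bTerm G c v w p := by
  unfold bTerm
  split
  · simp only [Pi.add_apply]; ring
  · simp

lemma bTerm_smul_left (r : ℝ) (u w : V → ℝ) (p : V × V) :
    bTerm G c (r • u) w p = r * bTerm G c u w p := by
  unfold bTerm
  split
  · simp only [Pi.smul_apply, smul_eq_mul]; ring
  · simp

/-- Energy bound along a walk: difference of values at the endpoints is controlled by the
square root of the total energy. -/
lemma walk_bound (hpos : ∀ x y, G.Adj x y → 0 < c x y) {a b : V} (w : G.Walk a b) :
    ∃ C : ℝ, 0 ≤ C ∧ ∀ u : V → ℝ, Summable (eTerm G c u) →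
      |u b - u a| ≤ C * Real.sqrt (∑' p, eTerm G c u p) := by
  induction w with
  | nil => exact ⟨0, le_rfl, fun u _ => by simp⟩
  | @cons a a' b h w ih =>
    obtain ⟨C, hC0, hC⟩ := ih
    refine ⟨C + (Real.sqrt (c a a'))⁻¹, by positivity, fun u hu => ?_⟩
    have hE0 : 0 ≤ ∑' p, eTerm G c u p := tsum_nonneg (fun p => eTerm_nonneg G c hpos u p)
    have hcpos := hpos a a' h
    have hterm : c a a' * (u a - u a') ^ 2 ≤ ∑' p, eTerm G c u p := by
      have := Summable.le_tsum hu (a, a') (fun j _ => eTerm_nonneg G c hpos u j)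
      simpa [eTerm, h] using this
    have h1 : |u a' - u a| ≤ (Real.sqrt (c a a'))⁻¹ * Real.sqrt (∑' p, eTerm G c u p) := by
      have hsq : (u a' - u a) ^ 2 ≤ (∑' p, eTerm G c u p) / c a a' := by
        rw [le_div_iff₀ hcpos]
        nlinarith [hterm]
      calc |u a' - u a| = Real.sqrt ((u a' - u a) ^ 2) := (Real.sqrt_sq_eq_abs _).symm
        _ ≤ Real.sqrt ((∑' p, eTerm G c u p) / c a a') := Real.sqrt_le_sqrt hsq
        _ = (Real.sqrt (c a a'))⁻¹ * Real.sqrt (∑' p, eTerm G c u p) := by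
            rw [Real.sqrt_div hE0, div_eq_inv_mul]
    calc |u b - u a| = |(u b - u a') + (u a' - u a)| := by ring_nf
      _ ≤ |u b - u a'| + |u a' - u a| := abs_add_le _ _
      _ ≤ C * Real.sqrt (∑' p, eTerm G c u p)
            + (Real.sqrt (c a a'))⁻¹ * Real.sqrt (∑' p, eTerm G c u p) :=
          add_le_add (hC u hu) h1
      _ = (C + (Real.sqrt (c a a'))⁻¹) * Real.sqrt (∑' p, eTerm G c u p) := by ring

/-- For each vertex `x` there is a constant controlling `|u x - u β|` via the energy. -/
lemma point_bound (hconn : G.Connected) (hpos : ∀ x y, G.Adj x y → 0 < c x y) (β x : V) :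
    ∃ C : ℝ, 0 ≤ C ∧ ∀ u : V → ℝ, Summable (eTerm G c u) →
      |u x - u β| ≤ C * Real.sqrt (∑' p, eTerm G c u p) := by
  obtain ⟨w⟩ := hconn.preconnected β x
  exact walk_bound G c hpos w

end VoltageAux

/-- Existence of voltage potentials: on a connected locally finite simple graph with conductance
`c`, for distinct vertices `α ≠ β` there is a finite-energy function `v` with
`Δ_c v = δ_α − δ_β` and `E_c(v) = 2(v(α) − v(β))`. -/
theorem exists_voltage_potential {V : Type*} [DecidableEq V] (G : SimpleGraph V) [DecidableRel G.Adj]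
    [G.LocallyFinite] (hconn : G.Connected) (c : V → V → ℝ)
    (hsymm : ∀ x y, c x y = c y x)
    (hpos : ∀ x y, G.Adj x y → 0 < c x y)
    (hzero : ∀ x y, ¬ G.Adj x y → c x y = 0)
    (α β : V) (hne : α ≠ β) :
    ∃ v : V → ℝ,
      Summable (fun p : V × V =>
        if G.Adj p.1 p.2 then c p.1 p.2 * (v p.1 - v p.2) ^ 2 else 0)
      ∧ (∀ x, ∑ y ∈ G.neighborFinset x, c x y * (v x - v y)
          = (if x = α then 1 else 0) - (if x = β then 1 else 0))
      ∧ (∑' p : V × V, if G.Adj p.1 p.2 then c p.1 p.2 * (v p.1 - v p.2) ^ 2 else 0)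
          = 2 * (v α - v β) := by
  classical
  -- `eTerm` of `0` and of negation
  have eTerm_zero : eTerm G c (0 : V → ℝ) = fun _ => 0 := by
    funext p; unfold eTerm; split <;> simp
  have eTerm_neg : ∀ u : V → ℝ, eTerm G c (-u) = eTerm G c u := by
    intro u; funext p; unfold eTerm; split
    · simp only [Pi.neg_apply]; ring
    · rfl
  -- the submodule of finite-energy functions vanishing at β
  let S : Submodule ℝ (V → ℝ) :=
    { carrier := {u | u β = 0 ∧ Summable (eTerm G c u)}
      add_mem' := fun {u v} hu hv =>
        ⟨by simp [hu.1, hv.1], eTerm_add_summable G c hpos hu.2 hv.2⟩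
      zero_mem' := ⟨rfl, by rw [eTerm_zero]; exact summable_zero⟩
      smul_mem' := fun r {u} hu =>
        ⟨by simp [hu.1], by rw [eTerm_smul]; exact hu.2.mul_left _⟩ }
  have hmem : ∀ u : S, u.1 β = 0 ∧ Summable (eTerm G c u.1) := fun u => u.2
  -- the inner product core
  letI core : InnerProductSpace.Core ℝ S :=
    { inner := fun u v => (1 / 2) * ∑' p, bTerm G c u.1 v.1 p
      conj_inner_symm := by
        intro u v
        simp only [conj_trivial]
        show (1 / 2 : ℝ) * ∑' p, bTerm G c v.1 u.1 p = (1 / 2) * ∑' p, bTerm G c u.1 v.1 p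
        rw [bTerm_comm]
      re_inner_nonneg := by
        intro u
        show 0 ≤ (1 / 2 : ℝ) * ∑' p, bTerm G c u.1 u.1 p
        have h : 0 ≤ (1 / 2 : ℝ) * ∑' p, bTerm G c u.1 u.1 p := by
          apply mul_nonneg (by norm_num)
          apply tsum_nonneg
          intro p
          rw [← congrFun (eTerm_eq_bTerm G c u.1) p]
          exact eTerm_nonneg G c hpos u.1 p
        exact h
      add_left := by
        intro u v w
        show (1 / 2 : ℝ) * ∑' p, bTerm G c ((u + v : S) : V → ℝ) w.1 p
          = (1 / 2) * (∑' p, bTerm G c u.1 w.1 p) + (1 / 2) * ∑' p, bTerm G c v.1 w.1 p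
        have h1 : ∀ p, bTerm G c ((u + v : S) : V → ℝ) w.1 p
            = bTerm G c u.1 w.1 p + bTerm G c v.1 w.1 p := by
          intro p
          rw [show ((u + v : S) : V → ℝ) = u.1 + v.1 from rfl]
          exact bTerm_add_left G c u.1 v.1 w.1 p
        rw [show (∑' p, bTerm G c ((u + v : S) : V → ℝ) w.1 p)
            = ∑' p, (bTerm G c u.1 w.1 p + bTerm G c v.1 w.1 p) from tsum_congr h1]
        rw [Summable.tsum_add (bTerm_summable G c hpos (hmem u).2 (hmem w).2)
          (bTerm_summable G c hpos (hmem v).2 (hmem w).2)]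
        ring
      smul_left := by
        intro u v r
        simp only [conj_trivial]
        show (1 / 2 : ℝ) * ∑' p, bTerm G c ((r • u : S) : V → ℝ) v.1 p
          = r * ((1 / 2) * ∑' p, bTerm G c u.1 v.1 p)
        have h1 : ∀ p, bTerm G c ((r • u : S) : V → ℝ) v.1 p = r * bTerm G c u.1 v.1 p := by
          intro p
          rw [show ((r • u : S) : V → ℝ) = r • u.1 from rfl]
          exact bTerm_smul_left G c r u.1 v.1 p
        rw [tsum_congr h1, tsum_mul_left]
        ring
      definite := by
        intro u hu
        have hE : ∑' p, eTerm G c u.1 p = 0 := by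
          have h2 : (1 / 2 : ℝ) * ∑' p, bTerm G c u.1 u.1 p = 0 := hu
          rw [← eTerm_eq_bTerm G c u.1] at h2
          linarith
        apply Subtype.ext
        funext z
        obtain ⟨C, hC0, hC⟩ := point_bound G c hconn hpos β z
        have := hC u.1 (hmem u).2
        rw [hE, Real.sqrt_zero, mul_zero, (hmem u).1, sub_zero] at this
        have hz : u.1 z = 0 := by
          have := abs_nonneg (u.1 z)
          have habs : |u.1 z| = 0 := le_antisymm ‹|u.1 z| ≤ 0› this
          exact abs_eq_zero.1 habs
        simpa using hz }
  letI : NormedAddCommGroup S := @InnerProductSpace.Core.toNormedAddCommGroup ℝ S _ _ _ core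
  letI : InnerProductSpace ℝ S := InnerProductSpace.ofCore core.toCore
  letI : UniformSpace S := PseudoMetricSpace.toUniformSpace
  letI : TopologicalSpace S := UniformSpace.toTopologicalSpace
  have hinner : ∀ u v : S, inner ℝ u v = (1 / 2) * ∑' p, bTerm G c u.1 v.1 p :=
    fun _ _ => rfl
  -- energy equals twice the squared norm
  have hnorm : ∀ u : S, ∑' p, eTerm G c u.1 p = 2 * ‖u‖ ^ 2 := by
    intro u
    have h1 : inner ℝ u u = ‖u‖ * ‖u‖ := real_inner_self_eq_norm_mul_norm u
    have h2 : inner ℝ u u = (1 / 2) * ∑' p, bTerm G c u.1 u.1 p := hinner u u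
    rw [← eTerm_eq_bTerm G c u.1] at h2
    rw [pow_two]
    linarith
  -- pointwise evaluation is bounded by the norm
  have hpb : ∀ x : V, ∃ C : ℝ, 0 ≤ C ∧ ∀ u : S, |u.1 x| ≤ C * ‖u‖ := by
    intro x
    obtain ⟨C, hC0, hC⟩ := point_bound G c hconn hpos β x
    refine ⟨C * Real.sqrt 2, by positivity, fun u => ?_⟩
    have h1 := hC u.1 (hmem u).2
    rw [(hmem u).1, sub_zero] at h1
    have h2 : Real.sqrt (∑' p, eTerm G c u.1 p) = Real.sqrt 2 * ‖u‖ := by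
      rw [hnorm u, pow_two, Real.sqrt_mul (by norm_num : (0:ℝ) ≤ 2),
        Real.sqrt_mul_self (norm_nonneg u)]
    rw [h2] at h1
    calc |u.1 x| ≤ C * (Real.sqrt 2 * ‖u‖) := h1
      _ = C * Real.sqrt 2 * ‖u‖ := by ring
  -- completeness
  haveI : CompleteSpace S := by
    apply Metric.complete_of_cauchySeq_tendsto
    intro f hf
    have hcauchy := Metric.cauchySeq_iff.1 hf
    -- pointwise limits
    have hptc : ∀ x : V, ∃ l : ℝ, Filter.Tendsto (fun n => (f n).1 x) Filter.atTop (nhds l) := by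
      intro x
      obtain ⟨C, hC0, hC⟩ := hpb x
      apply cauchySeq_tendsto_of_complete
      rw [Metric.cauchySeq_iff]
      intro ε hε
      have hδ : 0 < ε / (C + 1) := by positivity
      obtain ⟨N, hN⟩ := hcauchy (ε / (C + 1)) hδ
      refine ⟨N, fun m hm n hn => ?_⟩
      have h1 : |(f m).1 x - (f n).1 x| ≤ C * dist (f m) (f n) := by
        have h2 := hC (f m - f n)
        rw [show ((f m - f n : S) : V → ℝ) = (f m).1 - (f n).1 from rfl] at h2
        simpa [dist_eq_norm] using h2
      have h3 : C * dist (f m) (f n) < ε := by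
        calc C * dist (f m) (f n) ≤ C * (ε / (C + 1)) :=
              mul_le_mul_of_nonneg_left (hN m hm n hn).le hC0
          _ < (C + 1) * (ε / (C + 1)) := by
              apply mul_lt_mul_of_pos_right (lt_add_one C) hδ
          _ = ε := by field_simp
      calc dist ((f m).1 x) ((f n).1 x) = |(f m).1 x - (f n).1 x| := Real.dist_eq _ _
        _ ≤ C * dist (f m) (f n) := h1
        _ < ε := h3
    choose g hg using hptc
    have hgβ : g β = 0 := by
      have h1 : Filter.Tendsto (fun n => (f n).1 β) Filter.atTop (nhds 0) := by
        have : (fun n => (f n).1 β) = fun _ => (0 : ℝ) := funext fun n => (hmem (f n)).1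
        rw [this]
        exact tendsto_const_nhds
      exact tendsto_nhds_unique (hg β) h1
    -- main estimate
    have main : ∀ ε : ℝ, 0 < ε → ∃ N, ∀ n ≥ N,
        Summable (eTerm G c ((f n).1 - g)) ∧ ∑' p, eTerm G c ((f n).1 - g) p ≤ ε := by
      intro ε hε
      obtain ⟨N, hN⟩ := hcauchy (Real.sqrt (ε / 2)) (by positivity)
      refine ⟨N, fun n hn => ?_⟩
      have hbound : ∀ s : Finset (V × V), ∑ p ∈ s, eTerm G c ((f n).1 - g) p ≤ ε := by
        intro s
        have hT : Filter.Tendsto (fun m => ∑ p ∈ s, eTerm G c ((f n).1 - (f m).1) p)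
            Filter.atTop (nhds (∑ p ∈ s, eTerm G c ((f n).1 - g) p)) := by
          apply tendsto_finset_sum
          intro p _
          by_cases hadj : G.Adj p.1 p.2
          · simp only [eTerm, if_pos hadj, Pi.sub_apply]
            exact Filter.Tendsto.const_mul _
              ((((tendsto_const_nhds.sub (hg p.1))).sub
                ((tendsto_const_nhds.sub (hg p.2)))).pow 2)
          · simp only [eTerm, if_neg hadj]
            exact tendsto_const_nhds
        apply le_of_tendsto hT
        filter_upwards [Filter.eventually_ge_atTop N] with m hm
        have hsum : Summable (eTerm G c ((f n).1 - (f m).1)) := by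
          have := (hmem (f n - f m)).2
          rwa [show ((f n - f m : S) : V → ℝ) = (f n).1 - (f m).1 from rfl] at this
        have hle : ∑ p ∈ s, eTerm G c ((f n).1 - (f m).1) p
            ≤ ∑' p, eTerm G c ((f n).1 - (f m).1) p :=
          Summable.sum_le_tsum s (fun p _ => eTerm_nonneg G c hpos _ p) hsum
        have hE : ∑' p, eTerm G c ((f n).1 - (f m).1) p = 2 * ‖f n - f m‖ ^ 2 := by
          have := hnorm (f n - f m)
          rwa [show ((f n - f m : S) : V → ℝ) = (f n).1 - (f m).1 from rfl] at this
        have hd : ‖f n - f m‖ < Real.sqrt (ε / 2) := by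
          rw [← dist_eq_norm]
          exact hN n hn m hm
        have h2 : ‖f n - f m‖ ^ 2 ≤ Real.sqrt (ε / 2) ^ 2 :=
          pow_le_pow_left₀ (norm_nonneg _) hd.le 2
        rw [Real.sq_sqrt (by positivity : (0:ℝ) ≤ ε / 2)] at h2
        linarith
      have hsummable : Summable (eTerm G c ((f n).1 - g)) :=
        summable_of_sum_le (fun p => eTerm_nonneg G c hpos _ p) hbound
      exact ⟨hsummable, Summable.tsum_le_of_sum_le hsummable hbound⟩
    -- g belongs to S
    have hgS : g ∈ S := by
      obtain ⟨N0, hN0⟩ := main 1 one_pos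
      refine ⟨hgβ, ?_⟩
      have h1 : Summable (eTerm G c ((f N0).1 - g)) := (hN0 N0 le_rfl).1
      have h2 : Summable (eTerm G c (-((f N0).1 - g))) := by
        rw [eTerm_neg]; exact h1
      have h3 : Summable (eTerm G c ((f N0).1 + -((f N0).1 - g))) :=
        eTerm_add_summable G c hpos (hmem (f N0)).2 h2
      have h4 : (f N0).1 + -((f N0).1 - g) = g := by ring
      rwa [h4] at h3
    -- convergence in norm
    refine ⟨⟨g, hgS⟩, ?_⟩
    rw [Metric.tendsto_atTop]
    intro ε hε
    obtain ⟨N, hN⟩ := main (ε ^ 2 / 2) (by positivity)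
    refine ⟨N, fun n hn => ?_⟩
    have h1 : ∑' p, eTerm G c ((f n).1 - g) p ≤ ε ^ 2 / 2 := (hN n hn).2
    have h2 : ∑' p, eTerm G c ((f n - ⟨g, hgS⟩ : S) : V → ℝ) p
        = 2 * ‖f n - (⟨g, hgS⟩ : S)‖ ^ 2 := hnorm _
    rw [show ((f n - ⟨g, hgS⟩ : S) : V → ℝ) = (f n).1 - g from rfl] at h2
    have h3 : ‖f n - (⟨g, hgS⟩ : S)‖ ^ 2 < ε ^ 2 := by nlinarith [norm_nonneg (f n - (⟨g, hgS⟩ : S))]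
    have h4 : ‖f n - (⟨g, hgS⟩ : S)‖ < ε := lt_of_pow_lt_pow_left₀ 2 hε.le h3
    rw [dist_eq_norm]
    exact h4
  -- the evaluation functional at α
  obtain ⟨Cα, hCα0, hCα⟩ := hpb α
  let L : S →L[ℝ] ℝ :=
    LinearMap.mkContinuous ((LinearMap.proj α).comp S.subtype) Cα
      (fun u => by simpa [Real.norm_eq_abs] using hCα u)
  -- Riesz representation
  obtain ⟨w, hw⟩ := (InnerProductSpace.toDual ℝ S).surjective L
  have hwapp : ∀ u : S, inner ℝ w u = u.1 α := by
    intro u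
    have h1 : (InnerProductSpace.toDual ℝ S w) u = L u := by rw [hw]
    rw [InnerProductSpace.toDual_apply_apply] at h1
    simpa [L, LinearMap.mkContinuous_apply] using h1
  -- the Laplacian computation
  have lap : ∀ x : V, ∑ y ∈ G.neighborFinset x, c x y * (w.1 x - w.1 y)
      = (if x = α then 1 else 0) - (if x = β then 1 else 0) := by
    intro x
    -- the test function: δ_x minus the constant δ_x(β)
    set t : ℝ := if β = x then 1 else 0 with ht
    set u : V → ℝ := fun z => (if z = x then 1 else 0) - t with hu
    have huβ : u β = 0 := by rw [hu, ht]; simp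
    set s1 : Finset (V × V) := (G.neighborFinset x).image (fun y => (x, y)) with hs1
    set s2 : Finset (V × V) := (G.neighborFinset x).image (fun y => (y, x)) with hs2
    have hdiff : ∀ p : V × V,
        u p.1 - u p.2 = (if p.1 = x then 1 else 0) - (if p.2 = x then 1 else 0) := by
      intro p; rw [hu]; ring
    have hvanish : ∀ p : V × V, p ∉ s1 ∪ s2 → G.Adj p.1 p.2 → u p.1 - u p.2 = 0 := by
      intro p hp hadj
      have h1 : p.1 ≠ x := by
        rintro rfl
        apply hp
        apply Finset.mem_union_left
        rw [hs1, Finset.mem_image]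
        exact ⟨p.2, (G.mem_neighborFinset _ _).2 hadj, rfl⟩
      have h2 : p.2 ≠ x := by
        rintro rfl
        apply hp
        apply Finset.mem_union_right
        rw [hs2, Finset.mem_image]
        exact ⟨p.1, (G.mem_neighborFinset _ _).2 hadj.symm, rfl⟩
      rw [hdiff]; simp [h1, h2]
    have huS : u ∈ S := by
      refine ⟨huβ, ?_⟩
      apply summable_of_ne_finset_zero (s := s1 ∪ s2)
      intro p hp
      unfold eTerm
      split
      · rename_i hadj
        rw [hvanish p hp hadj]
        ring
      · rfl
    have hval : inner ℝ w (⟨u, huS⟩ : S) = u α := hwapp ⟨u, huS⟩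
    have hbvanish : ∀ p ∉ s1 ∪ s2, bTerm G c w.1 u p = 0 := by
      intro p hp
      unfold bTerm
      split
      · rename_i hadj
        rw [hvanish p hp hadj]
        ring
      · rfl
    have hts : ∑' p, bTerm G c w.1 u p = ∑ p ∈ s1 ∪ s2, bTerm G c w.1 u p :=
      tsum_eq_sum hbvanish
    have hdisj : Disjoint s1 s2 := by
      rw [Finset.disjoint_left]
      rintro p hp1 hp2
      rw [hs1, Finset.mem_image] at hp1
      rw [hs2, Finset.mem_image] at hp2
      obtain ⟨y, hy, rfl⟩ := hp1
      obtain ⟨y', hy', hpe⟩ := hp2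
      have h2 : x = y := congrArg Prod.snd hpe
      exact (G.ne_of_adj ((G.mem_neighborFinset _ _).1 hy)) h2
    have hinj1 : ∀ a ∈ G.neighborFinset x, ∀ b ∈ G.neighborFinset x,
        (x, a) = (x, b) → a = b := by
      intro a _ b _ h
      simpa using congrArg Prod.snd h
    have hinj2 : ∀ a ∈ G.neighborFinset x, ∀ b ∈ G.neighborFinset x,
        (a, x) = (b, x) → a = b := by
      intro a _ b _ h
      simpa using congrArg Prod.fst h
    have hsum1 : ∑ p ∈ s1, bTerm G c w.1 u p
        = ∑ y ∈ G.neighborFinset x, c x y * (w.1 x - w.1 y) := by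
      rw [hs1, Finset.sum_image hinj1]
      apply Finset.sum_congr rfl
      intro y hy
      have hadj : G.Adj x y := (G.mem_neighborFinset _ _).1 hy
      have hyx : y ≠ x := (G.ne_of_adj hadj).symm
      unfold bTerm
      rw [if_pos hadj, hdiff (x, y)]
      simp [hyx]
    have hsum2 : ∑ p ∈ s2, bTerm G c w.1 u p
        = ∑ y ∈ G.neighborFinset x, c x y * (w.1 x - w.1 y) := by
      rw [hs2, Finset.sum_image hinj2]
      apply Finset.sum_congr rfl
      intro y hy
      have hadj : G.Adj x y := (G.mem_neighborFinset _ _).1 hy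
      have hyx : y ≠ x := (G.ne_of_adj hadj).symm
      unfold bTerm
      rw [if_pos hadj.symm, hdiff (y, x)]
      rw [hsymm y x]
      simp [hyx]
    have hfin : inner ℝ w (⟨u, huS⟩ : S)
        = ∑ y ∈ G.neighborFinset x, c x y * (w.1 x - w.1 y) := by
      rw [hinner, show ((⟨u, huS⟩ : S) : V → ℝ) = u from rfl, hts,
        Finset.sum_union hdisj, hsum1, hsum2]
      ring
    have huα : u α = (if x = α then 1 else 0) - (if x = β then 1 else 0) := by
      rw [hu, ht]
      show (if α = x then (1:ℝ) else 0) - (if β = x then 1 else 0) = _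
      congr 1
      · exact if_congr eq_comm rfl rfl
      · exact if_congr eq_comm rfl rfl
    rw [← hfin, hval, huα]
  -- the energy identity
  have hEnergy : ∑' p, eTerm G c w.1 p = 2 * (w.1 α - w.1 β) := by
    have h1 : inner ℝ w w = w.1 α := hwapp w
    have h2 : inner ℝ w w = (1 / 2) * ∑' p, bTerm G c w.1 w.1 p := hinner w w
    rw [← eTerm_eq_bTerm G c w.1] at h2
    rw [(hmem w).1, sub_zero]
    linarith
  exact ⟨w.1, (hmem w).2, lap, hEnergy⟩
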